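/- For n ≥ 3, the intersection of the fixed-point spaces of the n operators EM_{1,2}, EM_{2,3}, …, EM_{n−1,n}, EM_{n,1} on (ℝ³)^{⊗n}, i.e. ⋂_i {x : EM_{i,i+1 (mod n)} x = x}, equals span{v₁₂^{⊗n}, v₁₃^{⊗n}}. -/

import Mathlib

open Matrix

/-- The blocks `B₁, B₂, B₃` of `EM`. -/
noncomputable def Bblk : Fin 3 → Matrix (Fin 3) (Fin 3) ℝ :=
  ![(1 / 4 : ℝ) • !![3, 1, 1; 1, 3, -1; 1, -1, 3],
    (1 / 4 : ℝ) • !![1, 3, 0; 3, 1, 0; -1, 1, 0],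
    (1 / 4 : ℝ) • !![1, 0, 3; -1, 0, 1; 3, 0, 1]]

/-- `EM = diag(B₁, B₂, B₃)`, regarded as a linear map on `ℝ³ ⊗ ℝ³` via the identification of
`ℝ³ ⊗ ℝ³` with `ℝ⁹` sending `e_i ⊗ e_j` to `e_{3(i−1)+j}` (so the basis of `ℝ³ ⊗ ℝ³` is indexed
by pairs, and the entry at `((i,j),(k,l))` is `(B_i)_{j,l}` if `i = k` and `0` otherwise). -/
noncomputable def EM : Matrix (Fin 3 × Fin 3) (Fin 3 × Fin 3) ℝ :=
  fun p q => if p.1 = q.1 then Bblk p.1 p.2 q.2 else 0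

/-- `EM_{i,j}`: the operator on `(ℝ³)^{⊗n}` (with basis indexed by `Fin n → Fin 3`) acting as
`EM` on the `i`-th and `j`-th tensor factors (in that order) and as the identity elsewhere. -/
noncomputable def EMop (n : ℕ) (i j : Fin n) :
    Matrix (Fin n → Fin 3) (Fin n → Fin 3) ℝ :=
  fun x y => EM (x i, x j) (y i, y j) *
    ∏ k ∈ Finset.univ.filter fun k => k ≠ i ∧ k ≠ j, (if x k = y k then (1 : ℝ) else 0)

/-- The `n`-fold tensor power `v^{⊗n}` of a vector `v ∈ ℝ³`, as a vector of `(ℝ³)^{⊗n}`. -/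
def tpow (n : ℕ) (v : Fin 3 → ℝ) : (Fin n → Fin 3) → ℝ := fun x => ∏ k, v (x k)

def v12 : Fin 3 → ℝ := ![1, 1, 0]
def v13 : Fin 3 → ℝ := ![1, 0, 1]

lemma sum_over_update {n : ℕ} (i j : Fin n) (hij : i ≠ j) (x : (Fin n → Fin 3) → ℝ)
    (y : Fin n → Fin 3) :
    (EMop n i j).mulVec x y = ∑ b : Fin 3, Bblk (y i) (y j) b * x (Function.update y j b) := by
  have hinj : Function.Injective (fun b => Function.update y j b) := by
    intro a b hab
    have := congrFun hab j
    simpa using this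
  have hsub : ∑ z : Fin n → Fin 3, EMop n i j y z * x z
      = ∑ z ∈ Finset.image (fun b => Function.update y j b) Finset.univ, EMop n i j y z * x z := by
    refine (Finset.sum_subset (Finset.subset_univ _) ?_).symm
    intro z _ hz
    have hz' : ¬ (z i = y i ∧ ∀ k, k ≠ i → k ≠ j → z k = y k) := by
      intro ⟨h1, h2⟩
      apply hz
      refine Finset.mem_image.mpr ⟨z j, Finset.mem_univ _, ?_⟩
      funext k
      by_cases hk : k = j
      · subst hk; simp
      · rw [Function.update_of_ne hk]
        by_cases hk' : k = i
        · subst hk'; exact h1.symm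
        · exact (h2 k hk' hk).symm
    rw [not_and_or] at hz'
    rcases hz' with h | h
    · have : EM (y i, y j) (z i, z j) = 0 := by
        simp only [EM]
        exact if_neg (fun hc => h hc.symm)
      simp [EMop, this]
    · push_neg at h
      obtain ⟨k, hk1, hk2, hk3⟩ := h
      have hk : k ∈ Finset.univ.filter fun k => k ≠ i ∧ k ≠ j := by
        simp [hk1, hk2]
      have : ∏ l ∈ Finset.univ.filter (fun l => l ≠ i ∧ l ≠ j), (if y l = z l then (1:ℝ) else 0) = 0 :=
        Finset.prod_eq_zero hk (by rw [if_neg (fun hc => hk3 hc.symm)])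
      simp [EMop, this]
  rw [Matrix.mulVec, dotProduct, hsub, Finset.sum_image (fun a _ b _ h => hinj h)]
  refine Finset.sum_congr rfl fun b _ => ?_
  have h1 : Function.update y j b i = y i := Function.update_of_ne hij b y
  have h2 : Function.update y j b j = b := Function.update_self j b y
  have hEM : EM (y i, y j) (Function.update y j b i, Function.update y j b j)
      = Bblk (y i) (y j) b := by
    rw [h1, h2, EM]; simp
  have hprod : ∏ k ∈ Finset.univ.filter (fun k => k ≠ i ∧ k ≠ j),
      (if y k = Function.update y j b k then (1:ℝ) else 0) = 1 := by
    refine Finset.prod_eq_one fun k hk => ?_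
    rw [Finset.mem_filter] at hk
    rw [Function.update_of_ne hk.2.2, if_pos rfl]
  rw [EMop]
  simp only [hEM, hprod, mul_one]

lemma fin3cases (v : Fin 3) : v = 0 ∨ v = 1 ∨ v = 2 := by fin_cases v <;> simp

lemma rules {n : ℕ} (i j : Fin n) (hij : i ≠ j) {x : (Fin n → Fin 3) → ℝ}
    (hx : (EMop n i j).mulVec x = x) (y : Fin n → Fin 3) :
    (y i = 0 → x (Function.update y j 0)
        = x (Function.update y j 1) + x (Function.update y j 2)) ∧
    (y i = 1 → x (Function.update y j 1) = x (Function.update y j 0)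
        ∧ x (Function.update y j 2) = 0) ∧
    (y i = 2 → x (Function.update y j 2) = x (Function.update y j 0)
        ∧ x (Function.update y j 1) = 0) := by
  have E : ∀ c : Fin 3, Bblk (y i) c 0 * x (Function.update y j 0)
      + Bblk (y i) c 1 * x (Function.update y j 1)
      + Bblk (y i) c 2 * x (Function.update y j 2) = x (Function.update y j c) := by
    intro c
    have h := congrFun hx (Function.update y j c)
    rw [sum_over_update i j hij] at h
    rw [Fin.sum_univ_three] at h
    simpa [Function.update_idem, Function.update_of_ne hij, Function.update_self] using h
  have E0 := E 0; have E1 := E 1; have E2 := E 2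
  refine ⟨fun hc => ?_, fun hc => ?_, fun hc => ?_⟩ <;>
    rw [hc] at E0 E1 E2 <;>
    simp only [Bblk, Matrix.smul_apply, smul_eq_mul, Matrix.cons_val_one, Matrix.cons_val_zero,
      Matrix.head_cons, Matrix.cons_val_two, Matrix.tail_cons, Matrix.of_apply,
      Matrix.cons_val'] at E0 E1 E2 <;>
    first
      | (constructor <;> linarith)
      | linarith

lemma cyc {n : ℕ} (hn : 3 ≤ n) (one : Fin n) (hone : one = ⟨1, lt_of_lt_of_le (by norm_num) hn⟩)
    (P : Fin 3 → Prop) (y : Fin n → Fin 3)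
    (h1 : ∃ p, ¬ P (y p)) (h2 : ∃ q, P (y q)) :
    ∃ i, ¬ P (y i) ∧ P (y (i + one)) := by
  haveI : NeZero n := ⟨by omega⟩
  by_contra hcon
  push_neg at hcon
  obtain ⟨p, hp⟩ := h1
  obtain ⟨q, hq⟩ := h2
  have hone1 : one = (1 : Fin n) := by
    rw [hone]; ext; simp [Fin.val_one', Nat.mod_eq_of_lt (by omega : 1 < n)]
  have step : ∀ m : ℕ, ¬ P (y (p + m • one)) := by
    intro m
    induction m with
    | zero => simpa using hp
    | succ k ih =>
      have he : p + (k+1) • one = (p + k • one) + one := by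
        rw [succ_nsmul, add_assoc]
      rw [he]
      exact hcon _ ih
  apply step (q - p).val
  have : p + (q - p).val • one = q := by
    open Fin.NatCast Fin.CommRing in
    have hm : ∀ m : ℕ, m • (1 : Fin n) = (m : Fin n) := fun m => by
      induction m with
      | zero => simp
      | succ k ih => rw [succ_nsmul, ih, Nat.cast_succ]
    open Fin.NatCast Fin.CommRing in
    rw [hone1, hm, Fin.cast_val_eq_self]
    ring
  rwa [this]

lemma gen {n : ℕ} (i j : Fin n) (hij : i ≠ j) (v : Fin 3 → ℝ)
    (hv : ∀ c d : Fin 3, v c * (Bblk c d 0 * v 0 + Bblk c d 1 * v 1 + Bblk c d 2 * v 2)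
      = v c * v d) :
    (EMop n i j).mulVec (tpow n v) = tpow n v := by
  funext y
  rw [sum_over_update i j hij]
  have hupd : ∀ b : Fin 3, tpow n v (Function.update y j b)
      = v b * ∏ k ∈ Finset.univ.erase j, v (y k) := by
    intro b
    rw [tpow]
    rw [← Finset.mul_prod_erase Finset.univ _ (Finset.mem_univ j), Function.update_self]
    congr 1
    exact Finset.prod_congr rfl fun k hk =>
      congrArg v (Function.update_of_ne (Finset.ne_of_mem_erase hk) b y)
  have hi : i ∈ Finset.univ.erase j := Finset.mem_erase.mpr ⟨hij, Finset.mem_univ i⟩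
  have hsplit : ∏ k ∈ Finset.univ.erase j, v (y k)
      = v (y i) * ∏ k ∈ (Finset.univ.erase j).erase i, v (y k) :=
    (Finset.mul_prod_erase _ _ hi).symm
  have hy : tpow n v y
      = v (y j) * (v (y i) * ∏ k ∈ (Finset.univ.erase j).erase i, v (y k)) := by
    rw [tpow]
    rw [← Finset.mul_prod_erase Finset.univ _ (Finset.mem_univ j), hsplit]
  simp only [hupd, hsplit]
  rw [Fin.sum_univ_three, hy]
  linear_combination (∏ k ∈ (Finset.univ.erase j).erase i, v (y k)) * hv (y i) (y j)

/-- for `n ≥ 3`, the intersection of the fixed-point spaces of the operators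
`EM_{1,2}, EM_{2,3}, …, EM_{n−1,n}, EM_{n,1}` (cyclically, `EM_{i,i+1 (mod n)}` for each `i`)
on `(ℝ³)^{⊗n}` equals `span{v₁₂^{⊗n}, v₁₃^{⊗n}}`. -/
theorem stmt12 (n : ℕ) (hn : 3 ≤ n) :
    {x : (Fin n → Fin 3) → ℝ | ∀ i : Fin n, (EMop n i (i + ⟨1, by omega⟩)).mulVec x = x} =
      ↑(Submodule.span ℝ {tpow n v12, tpow n v13}) := by
  have hone_ne : ∀ i : Fin n, i ≠ i + (⟨1, by omega⟩ : Fin n) := by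
    intro i hEq
    have h1 : (i + (⟨1, by omega⟩ : Fin n)).val = (i.val + 1) % n := by
      simp [Fin.add_def]
    have h2 : i.val = (i.val + 1) % n := by rw [← h1, ← hEq]
    have h3 : i.val < n := i.isLt
    rcases Nat.lt_or_ge (i.val + 1) n with hlt | hge
    · rw [Nat.mod_eq_of_lt hlt] at h2; omega
    · have h4 : i.val + 1 = n := by omega
      rw [h4, Nat.mod_self] at h2
      omega
  have hv12e : ∀ c d : Fin 3,
      v12 c * (Bblk c d 0 * v12 0 + Bblk c d 1 * v12 1 + Bblk c d 2 * v12 2)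
        = v12 c * v12 d := by
    intro c d; fin_cases c <;> fin_cases d <;> norm_num [Bblk, v12, Matrix.cons_val_two, Matrix.tail_cons, Matrix.head_cons]
  have hv13e : ∀ c d : Fin 3,
      v13 c * (Bblk c d 0 * v13 0 + Bblk c d 1 * v13 1 + Bblk c d 2 * v13 2)
        = v13 c * v13 d := by
    intro c d; fin_cases c <;> fin_cases d <;> norm_num [Bblk, v13, Matrix.cons_val_two, Matrix.tail_cons, Matrix.head_cons]
  ext x
  simp only [Set.mem_setOf_eq, SetLike.mem_coe]
  constructor
  · -- hard direction
    intro h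
    set one : Fin n := ⟨1, by omega⟩ with hone
    have key := fun (i : Fin n) (y : Fin n → Fin 3) => rules i (i + one) (hone_ne i) (h i) y
    set α := x (fun _ => 1) with hα
    set β := x (fun _ => 2) with hβ
    have kill : ∀ (i : Fin n) (y : Fin n → Fin 3),
        ((y i = 1 ∧ y (i + one) = 2) ∨ (y i = 2 ∧ y (i + one) = 1)) → x y = 0 := by
      intro i y hy
      rcases hy with ⟨h1, h2⟩ | ⟨h1, h2⟩
      · have := ((key i y).2.1 h1).2
        rwa [← h2, Function.update_eq_self] at this
      · have := ((key i y).2.2 h1).2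
        rwa [← h2, Function.update_eq_self] at this
    have pull : ∀ (i : Fin n) (y : Fin n → Fin 3), y (i + one) = 0 → (y i = 1 ∨ y i = 2) →
        x y = x (Function.update y (i + one) (y i)) := by
      intro i y h0 hy
      rcases hy with h1 | h1
      · have := ((key i y).2.1 h1).1
        rw [← h0, Function.update_eq_self] at this
        rw [h1]; exact this.symm
      · have := ((key i y).2.2 h1).1
        rw [← h0, Function.update_eq_self] at this
        rw [h1]; exact this.symm
    have split0 : ∀ (i : Fin n) (y : Fin n → Fin 3), y i = 0 → y (i + one) = 0 →
        x y = x (Function.update y (i + one) 1) + x (Function.update y (i + one) 2) := by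
      intro i y h1 h0
      have := (key i y).1 h1
      rwa [← h0, Function.update_eq_self] at this
    have base : ∀ y : Fin n → Fin 3, (∀ k, y k ≠ 0) →
        ((∃ p, y p = 1) → (∃ q, y q = 2) → x y = 0) ∧
        ((∀ k, y k ≠ 2) → x y = α) ∧
        ((∀ k, y k ≠ 1) → x y = β) := by
      intro y hy
      refine ⟨?_, ?_, ?_⟩
      · rintro ⟨p, hp⟩ ⟨q, hq⟩
        obtain ⟨i, hi1, hi2⟩ := cyc hn one hone (fun v => v = 2) y
          ⟨p, by rw [hp]; decide⟩ ⟨q, hq⟩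
        rcases fin3cases (y i) with h1 | h1 | h1
        · exact absurd h1 (hy i)
        · exact kill i y (Or.inl ⟨h1, hi2⟩)
        · exact absurd h1 hi1
      · intro h2
        have : y = fun _ => 1 := by
          funext k
          rcases fin3cases (y k) with hk | hk | hk
          · exact absurd hk (hy k)
          · exact hk
          · exact absurd hk (h2 k)
        rw [this]
      · intro h1
        have : y = fun _ => 2 := by
          funext k
          rcases fin3cases (y k) with hk | hk | hk
          · exact absurd hk (hy k)
          · exact absurd hk (h1 k)
          · exact hk
        rw [this]
    have main : ∀ (N : ℕ) (y : Fin n → Fin 3),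
        (Finset.univ.filter fun k => y k = 0).card ≤ N →
        ((∃ p, y p = 1) → (∃ q, y q = 2) → x y = 0) ∧
        ((∀ k, y k ≠ 2) → (∃ p, y p = 1) → x y = α) ∧
        ((∀ k, y k ≠ 1) → (∃ q, y q = 2) → x y = β) := by
      intro N
      induction N with
      | zero =>
        intro y hZ
        have hy0 : ∀ k, y k ≠ 0 := by
          intro k hk
          have hmem : k ∈ Finset.univ.filter (fun k => y k = 0) := by simp [hk]
          have := Finset.card_pos.mpr ⟨k, hmem⟩
          omega
        obtain ⟨ha, hb, hc⟩ := base y hy0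
        exact ⟨ha, fun h2 _ => hb h2, fun h1 _ => hc h1⟩
      | succ N ih =>
        intro y hZ
        by_cases hy0 : ∀ k, y k ≠ 0
        · obtain ⟨ha, hb, hc⟩ := base y hy0
          exact ⟨ha, fun h2 _ => hb h2, fun h1 _ => hc h1⟩
        push_neg at hy0
        obtain ⟨q0, hq0⟩ := hy0
        have step : ∀ i : Fin n, y i ≠ 0 → y (i + one) = 0 →
            x y = x (Function.update y (i + one) (y i)) ∧
            (Finset.univ.filter fun k => Function.update y (i + one) (y i) k = 0).card ≤ N := by
          intro i hi1 hi2
          have hx' : x y = x (Function.update y (i + one) (y i)) := by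
            rcases fin3cases (y i) with h1 | h1 | h1
            · exact absurd h1 hi1
            · exact pull i y hi2 (Or.inl h1)
            · exact pull i y hi2 (Or.inr h1)
          have hset : (Finset.univ.filter fun k => Function.update y (i + one) (y i) k = 0)
              = (Finset.univ.filter fun k => y k = 0).erase (i + one) := by
            ext k
            simp only [Finset.mem_filter, Finset.mem_erase, Finset.mem_univ, true_and]
            constructor
            · intro hk
              by_cases hkj : k = i + one
              · subst hkj
                rw [Function.update_self] at hk
                exact absurd hk hi1
              · rw [Function.update_of_ne hkj] at hk
                exact ⟨hkj, hk⟩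
            · rintro ⟨hkj, hk⟩
              rwa [Function.update_of_ne hkj]
          have hmem : i + one ∈ Finset.univ.filter (fun k => y k = 0) := by simp [hi2]
          have hpos := Finset.card_pos.mpr ⟨i + one, hmem⟩
          rw [hset, Finset.card_erase_of_mem hmem]
          exact ⟨hx', by omega⟩
        refine ⟨?_, ?_, ?_⟩
        · rintro ⟨p, hp⟩ ⟨r, hr⟩
          obtain ⟨i, hi1, hi2⟩ := cyc hn one hone (fun v => v = 0) y
            ⟨p, by rw [hp]; decide⟩ ⟨q0, hq0⟩
          obtain ⟨hx', hZ'⟩ := step i hi1 hi2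
          rw [hx']
          have hpj : p ≠ i + one := fun hc => by rw [hc, hi2] at hp; exact absurd hp (by decide)
          have hrj : r ≠ i + one := fun hc => by rw [hc, hi2] at hr; exact absurd hr (by decide)
          exact (ih _ hZ').1 ⟨p, by rw [Function.update_of_ne hpj]; exact hp⟩
            ⟨r, by rw [Function.update_of_ne hrj]; exact hr⟩
        · rintro h2 ⟨p, hp⟩
          obtain ⟨i, hi1, hi2⟩ := cyc hn one hone (fun v => v = 0) y
            ⟨p, by rw [hp]; decide⟩ ⟨q0, hq0⟩
          obtain ⟨hx', hZ'⟩ := step i hi1 hi2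
          rw [hx']
          have hpj : p ≠ i + one := fun hc => by rw [hc, hi2] at hp; exact absurd hp (by decide)
          refine (ih _ hZ').2.1 (fun k => ?_) ⟨p, by rw [Function.update_of_ne hpj]; exact hp⟩
          by_cases hkj : k = i + one
          · subst hkj; rw [Function.update_self]; exact h2 i
          · rw [Function.update_of_ne hkj]; exact h2 k
        · rintro h1 ⟨p, hp⟩
          obtain ⟨i, hi1, hi2⟩ := cyc hn one hone (fun v => v = 0) y
            ⟨p, by rw [hp]; decide⟩ ⟨q0, hq0⟩
          obtain ⟨hx', hZ'⟩ := step i hi1 hi2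
          rw [hx']
          have hpj : p ≠ i + one := fun hc => by rw [hc, hi2] at hp; exact absurd hp (by decide)
          refine (ih _ hZ').2.2 (fun k => ?_) ⟨p, by rw [Function.update_of_ne hpj]; exact hp⟩
          by_cases hkj : k = i + one
          · subst hkj; rw [Function.update_self]; exact h1 i
          · rw [Function.update_of_ne hkj]; exact h1 k
    have t12_one : ∀ y : Fin n → Fin 3, (∀ k, y k ≠ 2) → tpow n v12 y = 1 := by
      intro y hy
      refine Finset.prod_eq_one fun k _ => ?_
      rcases fin3cases (y k) with hk | hk | hk
      · rw [hk]; norm_num [v12]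
      · rw [hk]; norm_num [v12]
      · exact absurd hk (hy k)
    have t12_zero : ∀ y : Fin n → Fin 3, (∃ q, y q = 2) → tpow n v12 y = 0 := by
      rintro y ⟨q, hq⟩
      exact Finset.prod_eq_zero (Finset.mem_univ q) (by rw [hq]; norm_num [v12, Matrix.cons_val_two, Matrix.tail_cons, Matrix.head_cons])
    have t13_one : ∀ y : Fin n → Fin 3, (∀ k, y k ≠ 1) → tpow n v13 y = 1 := by
      intro y hy
      refine Finset.prod_eq_one fun k _ => ?_
      rcases fin3cases (y k) with hk | hk | hk
      · rw [hk]; norm_num [v13, Matrix.cons_val_two, Matrix.tail_cons, Matrix.head_cons]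
      · exact absurd hk (hy k)
      · rw [hk]; norm_num [v13, Matrix.cons_val_two, Matrix.tail_cons, Matrix.head_cons]
    have t13_zero : ∀ y : Fin n → Fin 3, (∃ q, y q = 1) → tpow n v13 y = 0 := by
      rintro y ⟨q, hq⟩
      exact Finset.prod_eq_zero (Finset.mem_univ q) (by rw [hq]; norm_num [v13])
    have hfinal : ∀ y : Fin n → Fin 3, x y = α * tpow n v12 y + β * tpow n v13 y := by
      intro y
      have hmain := main _ y le_rfl
      by_cases h1 : ∃ p, y p = 1 <;> by_cases h2 : ∃ q, y q = 2
      · rw [hmain.1 h1 h2, t12_zero y h2, t13_zero y h1]; ring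
      · push_neg at h2
        rw [hmain.2.1 h2 h1, t12_one y h2, t13_zero y h1]; ring
      · push_neg at h1
        rw [hmain.2.2 h1 h2, t12_zero y h2, t13_one y h1]; ring
      · push_neg at h1; push_neg at h2
        have hall : ∀ k, y k = 0 := by
          intro k
          rcases fin3cases (y k) with hk | hk | hk
          · exact hk
          · exact absurd hk (h1 k)
          · exact absurd hk (h2 k)
        have i0 : Fin n := ⟨0, by omega⟩
        have hs := split0 ⟨0, by omega⟩ y (hall _) (hall _)
        have hb : x (Function.update y ((⟨0, by omega⟩ : Fin n) + one) 1) = α := by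
          refine (main _ _ le_rfl).2.1 (fun k => ?_) ⟨_, Function.update_self _ _ _⟩
          by_cases hkj : k = (⟨0, by omega⟩ : Fin n) + one
          · subst hkj; rw [Function.update_self]; decide
          · rw [Function.update_of_ne hkj, hall k]; decide
        have hc : x (Function.update y ((⟨0, by omega⟩ : Fin n) + one) 2) = β := by
          refine (main _ _ le_rfl).2.2 (fun k => ?_) ⟨_, Function.update_self _ _ _⟩
          by_cases hkj : k = (⟨0, by omega⟩ : Fin n) + one
          · subst hkj; rw [Function.update_self]; decide
          · rw [Function.update_of_ne hkj, hall k]; decide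
        rw [hs, hb, hc, t12_one y (fun k => by rw [hall k]; decide),
          t13_one y (fun k => by rw [hall k]; decide)]
        ring
    refine Submodule.mem_span_pair.mpr ⟨α, β, funext fun y => ?_⟩
    simp only [Pi.add_apply, Pi.smul_apply, smul_eq_mul]
    exact (hfinal y).symm
  · -- easy direction
    intro hx i
    obtain ⟨c, d, hcd⟩ := Submodule.mem_span_pair.mp hx
    rw [← hcd, Matrix.mulVec_add, Matrix.mulVec_smul, Matrix.mulVec_smul,
      gen i _ (hone_ne i) v12 hv12e, gen i _ (hone_ne i) v13 hv13e]
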